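/- Let (V_n) be a sequence of random vectors in ℝ^d converging in distribution to V, with induced laws P_n and P. Let A ⊆ ℝ^d be a closed continuity set of P with P(A) > 0 and P_n(A) > 0 for all n. Then the conditional laws P_n(·|A) converge weakly to P(·|A). -/

import Mathlib

open MeasureTheory ProbabilityTheory Filter Metric

set_option linter.unusedSectionVars false

section Aux

variable {Ω : Type*} [MeasurableSpace Ω] [PseudoMetricSpace Ω] [OpensMeasurableSpace Ω]

/-- A continuous approximation to the indicator of `S`, clamped to `[0,1]`. -/
noncomputable def softInd (S : Set Ω) (δ : ℝ) : BoundedContinuousFunction Ω ℝ :=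
  BoundedContinuousFunction.ofNormedAddCommGroup
    (fun x => max 0 (min 1 (1 - Metric.infDist x S / δ)))
    (by
      apply Continuous.max continuous_const
      apply Continuous.min continuous_const
      exact continuous_const.sub ((Metric.continuous_infDist_pt S).div_const δ))
    1
    (by
      intro x
      rw [Real.norm_eq_abs, abs_le]
      constructor
      · linarith [le_max_left (0:ℝ) (min 1 (1 - Metric.infDist x S / δ))]
      · exact max_le (by norm_num) ((min_le_left _ _)))

lemma softInd_apply (S : Set Ω) (δ : ℝ) (x : Ω) :
    softInd S δ x = max 0 (min 1 (1 - Metric.infDist x S / δ)) := rfl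

lemma softInd_nonneg (S : Set Ω) (δ : ℝ) (x : Ω) : 0 ≤ softInd S δ x :=
  le_max_left _ _

lemma softInd_le_one (S : Set Ω) (δ : ℝ) (x : Ω) : softInd S δ x ≤ 1 :=
  max_le (by norm_num) (min_le_left _ _)

lemma softInd_eq_one {S : Set Ω} {δ : ℝ} {x : Ω} (hx : Metric.infDist x S = 0) :
    softInd S δ x = 1 := by
  rw [softInd_apply, hx]
  norm_num

lemma softInd_eq_zero {S : Set Ω} {δ : ℝ} {x : Ω} (hδ : 0 < δ)
    (hx : δ ≤ Metric.infDist x S) : softInd S δ x = 0 := by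
  have h1 : (1 : ℝ) ≤ Metric.infDist x S / δ := (one_le_div hδ).2 hx
  have : min 1 (1 - Metric.infDist x S / δ) ≤ 0 :=
    le_trans (min_le_right _ _) (by linarith)
  rw [softInd_apply]
  exact max_eq_left this

lemma softInd_tendsto_zero {S : Set Ω} (hS : S.Nonempty) {x : Ω} (hx : x ∉ closure S) :
    Tendsto (fun k : ℕ => softInd S (1 / (k + 1)) x) atTop (nhds 0) := by
  have hpos : 0 < Metric.infDist x S := by
    rcases lt_or_eq_of_le (Metric.infDist_nonneg (x := x) (s := S)) with h | h
    · exact h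
    · exact absurd ((Metric.mem_closure_iff_infDist_zero hS).2 h.symm) hx
  have hev : ∀ᶠ k : ℕ in atTop, softInd S (1 / (k + 1)) x = 0 := by
    have hto : Tendsto (fun k : ℕ => 1 / ((k : ℝ) + 1)) atTop (nhds 0) :=
      tendsto_one_div_add_atTop_nhds_zero_nat
    filter_upwards [hto.eventually_le_const hpos] with k hk
    exact softInd_eq_zero (by positivity) hk
  exact Tendsto.congr' (by filter_upwards [hev] with k hk; exact hk.symm) tendsto_const_nhds

end Aux

section Main

variable {Ω : Type*} [MeasurableSpace Ω] [PseudoMetricSpace Ω] [OpensMeasurableSpace Ω]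
  [HasOuterApproxClosed Ω]

/-- Key lemma: convergence of integrals over a closed continuity set. -/
lemma tendsto_setIntegral_of_weak_conv
    (P : ℕ → Measure Ω) (Plim : Measure Ω)
    [∀ n, IsProbabilityMeasure (P n)] [IsProbabilityMeasure Plim]
    (hconv : ∀ f : BoundedContinuousFunction Ω ℝ,
      Tendsto (fun n => ∫ x, f x ∂(P n)) atTop (nhds (∫ x, f x ∂Plim)))
    (A : Set Ω) (hAclosed : IsClosed A) (hAne : A.Nonempty) (hAcne : Aᶜ.Nonempty)
    (hAcont : Plim (frontier A) = 0)
    (f : BoundedContinuousFunction Ω ℝ) :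
    Tendsto (fun n => ∫ x in A, f x ∂(P n)) atTop (nhds (∫ x in A, f x ∂Plim)) := by
  have hAmeas : MeasurableSet A := hAclosed.measurableSet
  set C : ℝ := ‖f‖ with hC
  set h : BoundedContinuousFunction Ω ℝ := f + BoundedContinuousFunction.const Ω C with hh
  have h_apply : ∀ x, h x = f x + C := fun x => rfl
  have h_nonneg : ∀ x, 0 ≤ h x := by
    intro x
    have := abs_le.1 (f.norm_coe_le_norm x)
    rw [h_apply]; linarith [this.1]
  have h_le : ∀ x, h x ≤ 2 * C := by
    intro x
    have := abs_le.1 (f.norm_coe_le_norm x)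
    rw [h_apply]; linarith [this.2]
  have hC0 : 0 ≤ C := norm_nonneg f
  -- measure of A converges
  have hPA : Tendsto (fun n => P n A) atTop (nhds (Plim A)) := by
    let μs : ℕ → ProbabilityMeasure Ω := fun n => ⟨P n, inferInstance⟩
    let μ : ProbabilityMeasure Ω := ⟨Plim, inferInstance⟩
    have hμ : Tendsto μs atTop (nhds μ) :=
      ProbabilityMeasure.tendsto_iff_forall_integral_tendsto.mpr hconv
    exact ProbabilityMeasure.tendsto_measure_of_null_frontier_of_tendsto' hμ hAcont
  have hPAr : Tendsto (fun n => (P n A).toReal) atTop (nhds ((Plim A).toReal)) :=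
    (ENNReal.tendsto_toReal (measure_ne_top _ _)).comp hPA
  -- the approximating sequences
  set δ : ℕ → ℝ := fun k => 1 / ((k : ℝ) + 1) with hδ
  have hδpos : ∀ k, 0 < δ k := fun k => by positivity
  set gφ : ℕ → BoundedContinuousFunction Ω ℝ := fun k => h * softInd A (δ k) with hgφ
  set gψ : ℕ → BoundedContinuousFunction Ω ℝ :=
    fun k => h * ((1 : BoundedContinuousFunction Ω ℝ) - softInd Aᶜ (δ k)) with hgψ
  have gφ_apply : ∀ k x, gφ k x = h x * softInd A (δ k) x := fun k x => rfl
  have gψ_apply : ∀ k x, gψ k x = h x * (1 - softInd Aᶜ (δ k) x) := fun k x => rfl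
  have gφ_nonneg : ∀ k x, 0 ≤ gφ k x := fun k x =>
    mul_nonneg (h_nonneg x) (softInd_nonneg _ _ _)
  have gψ_nonneg : ∀ k x, 0 ≤ gψ k x := by
    intro k x
    rw [gψ_apply]
    exact mul_nonneg (h_nonneg x) (by linarith [softInd_le_one Aᶜ (δ k) x])
  have gφ_le : ∀ k x, gφ k x ≤ 2 * C := by
    intro k x
    rw [gφ_apply]
    calc h x * softInd A (δ k) x ≤ h x * 1 :=
          mul_le_mul_of_nonneg_left (softInd_le_one _ _ _) (h_nonneg x)
      _ = h x := mul_one _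
      _ ≤ 2 * C := h_le x
  have gψ_le : ∀ k x, gψ k x ≤ 2 * C := by
    intro k x
    rw [gψ_apply]
    calc h x * (1 - softInd Aᶜ (δ k) x) ≤ h x * 1 :=
          mul_le_mul_of_nonneg_left (by linarith [softInd_nonneg Aᶜ (δ k) x]) (h_nonneg x)
      _ = h x := mul_one _
      _ ≤ 2 * C := h_le x
  -- pointwise comparisons with the indicator
  have ind_le_φ : ∀ k x, A.indicator (fun y => h y) x ≤ gφ k x := by
    intro k x
    by_cases hx : x ∈ A
    · rw [Set.indicator_of_mem hx, gφ_apply,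
        softInd_eq_one (Metric.infDist_zero_of_mem hx), mul_one]
    · rw [Set.indicator_of_notMem hx]
      exact gφ_nonneg k x
  have ψ_le_ind : ∀ k x, gψ k x ≤ A.indicator (fun y => h y) x := by
    intro k x
    by_cases hx : x ∈ A
    · rw [Set.indicator_of_mem hx, gψ_apply]
      calc h x * (1 - softInd Aᶜ (δ k) x) ≤ h x * 1 :=
            mul_le_mul_of_nonneg_left (by linarith [softInd_nonneg Aᶜ (δ k) x]) (h_nonneg x)
        _ = h x := mul_one _
    · rw [Set.indicator_of_notMem hx, gψ_apply,
        softInd_eq_one (Metric.infDist_zero_of_mem (Set.mem_compl hx))]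
      norm_num
  -- pointwise limits
  have hφ_ptwise : ∀ x, Tendsto (fun k => gφ k x) atTop
      (nhds (A.indicator (fun y => h y) x)) := by
    intro x
    by_cases hx : x ∈ A
    · rw [Set.indicator_of_mem hx]
      have : ∀ k, gφ k x = h x := fun k => by
        rw [gφ_apply, softInd_eq_one (Metric.infDist_zero_of_mem hx), mul_one]
      simp_rw [this]
      exact tendsto_const_nhds
    · rw [Set.indicator_of_notMem hx]
      have hxc : x ∉ closure A := by rwa [hAclosed.closure_eq]
      have h2 := (softInd_tendsto_zero hAne hxc).const_mul (h x)
      rw [mul_zero] at h2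
      exact Tendsto.congr (fun k => (gφ_apply k x).symm) h2
  have hψ_ptwise : ∀ x, Tendsto (fun k => gψ k x) atTop
      (nhds ((interior A).indicator (fun y => h y) x)) := by
    intro x
    by_cases hx : x ∈ interior A
    · rw [Set.indicator_of_mem hx]
      have hxc : x ∉ closure Aᶜ := by
        rw [closure_compl]
        simpa using hx
      have h1 : Tendsto (fun k => softInd Aᶜ (δ k) x) atTop (nhds 0) :=
        softInd_tendsto_zero hAcne hxc
      have h2 : Tendsto (fun k => h x * (1 - softInd Aᶜ (δ k) x)) atTop
          (nhds (h x * (1 - 0))) :=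
        (tendsto_const_nhds.sub h1).const_mul (h x)
      rw [sub_zero, mul_one] at h2
      exact Tendsto.congr (fun k => (gψ_apply k x).symm) h2
    · rw [Set.indicator_of_notMem hx]
      have hxc : x ∈ closure Aᶜ := by
        rw [closure_compl]
        simpa using hx
      have : ∀ k, gψ k x = 0 := fun k => by
        rw [gψ_apply, softInd_eq_one (Metric.infDist_zero_of_mem_closure hxc)]
        simp
      simp_rw [this]
      exact tendsto_const_nhds
  -- dominated convergence for the Plim-integrals
  have hdom : ∀ (g : ℕ → BoundedContinuousFunction Ω ℝ) (glim : Ω → ℝ),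
      (∀ k x, 0 ≤ g k x) → (∀ k x, g k x ≤ 2 * C) →
      (∀ x, Tendsto (fun k => g k x) atTop (nhds (glim x))) →
      Tendsto (fun k => ∫ x, g k x ∂Plim) atTop (nhds (∫ x, glim x ∂Plim)) := by
    intro g glim hg0 hg2 hgt
    apply tendsto_integral_of_dominated_convergence (fun _ => 2 * C)
    · exact fun k => (g k).continuous.aestronglyMeasurable
    · exact integrable_const _
    · intro k
      filter_upwards with x
      rw [Real.norm_eq_abs, abs_le]
      constructor
      · linarith [hg0 k x]
      · exact hg2 k x
    · filter_upwards with x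
      exact hgt x
  have hφlim : Tendsto (fun k => ∫ x, gφ k x ∂Plim) atTop
      (nhds (∫ x, A.indicator (fun y => h y) x ∂Plim)) :=
    hdom gφ _ gφ_nonneg gφ_le hφ_ptwise
  have hψlim0 : Tendsto (fun k => ∫ x, gψ k x ∂Plim) atTop
      (nhds (∫ x, (interior A).indicator (fun y => h y) x ∂Plim)) :=
    hdom gψ _ gψ_nonneg gψ_le hψ_ptwise
  -- the two indicators agree a.e.
  have h_ae : (fun x => (interior A).indicator (fun y => h y) x)
      =ᵐ[Plim] (fun x => A.indicator (fun y => h y) x) := by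
    have hsub : {x | (interior A).indicator (fun y => h y) x ≠
        A.indicator (fun y => h y) x} ⊆ frontier A := by
      intro x hx
      simp only [Set.mem_setOf_eq] at hx
      by_contra hxf
      apply hx
      by_cases hxi : x ∈ interior A
      · rw [Set.indicator_of_mem hxi, Set.indicator_of_mem (interior_subset hxi)]
      · have hxA : x ∉ A := by
          intro hxA
          exact hxf ⟨subset_closure hxA, hxi⟩
        rw [Set.indicator_of_notMem hxi, Set.indicator_of_notMem hxA]
    exact measure_mono_null hsub hAcont
  have hψlim : Tendsto (fun k => ∫ x, gψ k x ∂Plim) atTop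
      (nhds (∫ x, A.indicator (fun y => h y) x ∂Plim)) := by
    rwa [integral_congr_ae h_ae] at hψlim0
  -- limsup / liminf argument for J n = ∫ indicator A h dP n
  set J : ℕ → ℝ := fun n => ∫ x, A.indicator (fun y => h y) x ∂(P n) with hJdef
  set T : ℝ := ∫ x, A.indicator (fun y => h y) x ∂Plim with hT
  have hind_int : ∀ μ : Measure Ω, IsProbabilityMeasure μ →
      Integrable (fun x => A.indicator (fun y => h y) x) μ := by
    intro μ _
    exact (h.integrable μ).indicator hAmeas
  have hJ_ub : ∀ k n, J n ≤ ∫ x, gφ k x ∂(P n) := by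
    intro k n
    exact integral_mono (hind_int _ inferInstance) ((gφ k).integrable _) (ind_le_φ k)
  have hJ_lb : ∀ k n, ∫ x, gψ k x ∂(P n) ≤ J n := by
    intro k n
    exact integral_mono ((gψ k).integrable _) (hind_int _ inferInstance) (ψ_le_ind k)
  have hJ0 : ∀ n, 0 ≤ J n := by
    intro n
    apply integral_nonneg
    intro x
    exact Set.indicator_nonneg (fun y _ => h_nonneg y) x
  have hJ2C : ∀ n, J n ≤ 2 * C := by
    intro n
    have : J n ≤ ∫ _x, 2 * C ∂(P n) := by
      apply integral_mono (hind_int _ inferInstance) (integrable_const _)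
      intro x
      by_cases hx : x ∈ A
      · simp only [Set.indicator_of_mem hx]; exact h_le x
      · simp only [Set.indicator_of_notMem hx]; linarith
    simpa using this
  have hbddJ_le : IsBoundedUnder (· ≤ ·) atTop J :=
    isBoundedUnder_of ⟨2 * C, fun n => hJ2C n⟩
  have hbddJ_ge : IsBoundedUnder (· ≥ ·) atTop J :=
    isBoundedUnder_of ⟨0, fun n => hJ0 n⟩
  have hlimsup : limsup J atTop ≤ T := by
    have key : ∀ k, limsup J atTop ≤ ∫ x, gφ k x ∂Plim := by
      intro k
      have h1 : limsup J atTop ≤ limsup (fun n => ∫ x, gφ k x ∂(P n)) atTop := by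
        exact limsup_le_limsup (Eventually.of_forall (hJ_ub k))
          hbddJ_ge.isCoboundedUnder_le (hconv (gφ k)).isBoundedUnder_le
      rwa [(hconv (gφ k)).limsup_eq] at h1
    exact ge_of_tendsto hφlim (Eventually.of_forall key)
  have hliminf : T ≤ liminf J atTop := by
    have key : ∀ k, ∫ x, gψ k x ∂Plim ≤ liminf J atTop := by
      intro k
      have h1 : liminf (fun n => ∫ x, gψ k x ∂(P n)) atTop ≤ liminf J atTop := by
        exact liminf_le_liminf (Eventually.of_forall (hJ_lb k))
          (hconv (gψ k)).isBoundedUnder_ge hbddJ_le.isCoboundedUnder_ge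
      rwa [(hconv (gψ k)).liminf_eq] at h1
    exact le_of_tendsto hψlim (Eventually.of_forall key)
  have hJT : Tendsto J atTop (nhds T) :=
    tendsto_of_le_liminf_of_limsup_le hliminf hlimsup hbddJ_le hbddJ_ge
  -- translate back from h to f
  have hsplit : ∀ μ : Measure Ω, IsProbabilityMeasure μ →
      ∫ x, A.indicator (fun y => h y) x ∂μ = (∫ x in A, f x ∂μ) + C * (μ A).toReal := by
    intro μ _
    rw [integral_indicator hAmeas]
    have h1 : ∫ x in A, h x ∂μ = (∫ x in A, f x ∂μ) + ∫ x in A, C ∂μ := by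
      simp_rw [h_apply]
      exact integral_add ((f.integrable μ).restrict) (integrable_const _)
    rw [h1, setIntegral_const, smul_eq_mul, mul_comm]; rfl
  have hfinal : Tendsto (fun n => J n - C * ((P n A)).toReal) atTop
      (nhds (T - C * (Plim A).toReal)) :=
    hJT.sub (hPAr.const_mul C)
  have heqn : (fun n => J n - C * ((P n A)).toReal) = fun n => ∫ x in A, f x ∂(P n) := by
    funext n
    simp only [hJdef]
    rw [hsplit (P n) inferInstance]
    ring
  have heqT : T - C * (Plim A).toReal = ∫ x in A, f x ∂Plim := by
    rw [hT, hsplit Plim inferInstance]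
    ring
  rw [heqn, heqT] at hfinal
  exact hfinal

end Main

theorem conditioned_weak_convergence {d : ℕ}
    (P : ℕ → Measure (Fin d → ℝ)) (Plim : Measure (Fin d → ℝ))
    [∀ n, IsProbabilityMeasure (P n)] [IsProbabilityMeasure Plim]
    (hconv : ∀ f : BoundedContinuousFunction (Fin d → ℝ) ℝ,
      Filter.Tendsto (fun n => ∫ x, f x ∂(P n)) Filter.atTop (nhds (∫ x, f x ∂Plim)))
    (A : Set (Fin d → ℝ)) (hAclosed : IsClosed A)
    (hAcont : Plim (frontier A) = 0) (hApos : Plim A ≠ 0)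
    (hAn : ∀ n, P n A ≠ 0) :
    ∀ f : BoundedContinuousFunction (Fin d → ℝ) ℝ,
      Filter.Tendsto (fun n => ∫ x, f x ∂((P n)[|A])) Filter.atTop
        (nhds (∫ x, f x ∂(Plim[|A]))) := by
  intro f
  by_cases hU : A = Set.univ
  · subst hU
    have h1 : ∀ μ : Measure (Fin d → ℝ), [IsProbabilityMeasure μ] →
        μ[|Set.univ] = μ := by
      intro μ _
      simp [ProbabilityTheory.cond, Measure.restrict_univ]
    rw [h1 Plim]
    simp_rw [h1 (P _)]
    exact hconv f
  -- nontrivial case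
  have hAne : A.Nonempty := by
    rcases Set.eq_empty_or_nonempty A with h | h
    · exact absurd (by simp [h]) hApos
    · exact h
  have hAcne : Aᶜ.Nonempty := Set.nonempty_compl.2 hU
  -- measure of A converges
  have hPA : Tendsto (fun n => P n A) Filter.atTop (nhds (Plim A)) := by
    let μs : ℕ → ProbabilityMeasure (Fin d → ℝ) := fun n => ⟨P n, inferInstance⟩
    let μ : ProbabilityMeasure (Fin d → ℝ) := ⟨Plim, inferInstance⟩
    have hμ : Filter.Tendsto μs Filter.atTop (nhds μ) :=
      ProbabilityMeasure.tendsto_iff_forall_integral_tendsto.mpr hconv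
    exact ProbabilityMeasure.tendsto_measure_of_null_frontier_of_tendsto' hμ hAcont
  have hPAr : Tendsto (fun n => (P n A).toReal) Filter.atTop (nhds ((Plim A).toReal)) :=
    (ENNReal.tendsto_toReal (measure_ne_top _ _)).comp hPA
  have hJ : Tendsto (fun n => ∫ x in A, f x ∂(P n)) Filter.atTop
      (nhds (∫ x in A, f x ∂Plim)) :=
    tendsto_setIntegral_of_weak_conv P Plim hconv A hAclosed hAne hAcne hAcont f
  have hint : ∀ (μ : Measure (Fin d → ℝ)),
      ∫ x, f x ∂(μ[|A]) = (μ A).toReal⁻¹ * ∫ x in A, f x ∂μ := by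
    intro μ
    rw [ProbabilityTheory.cond, integral_smul_measure, ENNReal.toReal_inv, smul_eq_mul]
  simp_rw [hint]
  have hne : ((Plim A).toReal)⁻¹ ≠ 0 := by
    simp [ENNReal.toReal_eq_zero_iff, hApos, measure_ne_top]
  exact (hPAr.inv₀ (by simp [ENNReal.toReal_eq_zero_iff, hApos, measure_ne_top])).mul hJ
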